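/- Let X, Y be Hilbert spaces and A : X → Y a compact linear operator with operator norm ‖A‖ = 1. Let x† ∈ X satisfy the source condition x† = A*z with ‖z‖ ≤ ρ, set y† = Ax†, and let y^δ ∈ Y with ‖y^δ − y†‖ ≤ δ. For 0 < α ≤ 1, the Tikhonov reconstruction T_α y^δ = (A*A + αI)⁻¹ A* y^δ satisfies ‖T_α y^δ − x†‖ ≤ (1/2)(δ/√α + √α · ρ). -/

import Mathlib

/-- Tikhonov error bound for `0 < α ≤ 1` under the source condition `x† = A*z`,
`‖z‖ ≤ ρ`, for a compact operator with `‖A‖ = 1`. The reconstruction `T_α y^δ` is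
characterized as the solution of the normal equation `(A*A + αI) x_α = A* y^δ`. -/
theorem tikhonov_error_small_alpha
    {X Y : Type*} [NormedAddCommGroup X] [InnerProductSpace ℝ X] [CompleteSpace X]
    [NormedAddCommGroup Y] [InnerProductSpace ℝ Y] [CompleteSpace Y]
    (A : X →L[ℝ] Y) (hA : IsCompactOperator A) (hAnorm : ‖A‖ = 1)
    (z : Y) (ρ : ℝ) (hz : ‖z‖ ≤ ρ)
    (xdag : X) (hxdag : xdag = ContinuousLinearMap.adjoint A z)
    (δ : ℝ) (yδ : Y) (hnoise : ‖yδ - A xdag‖ ≤ δ)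
    (α : ℝ) (hα : 0 < α) (hα1 : α ≤ 1)
    (xα : X)
    (hxα : ContinuousLinearMap.adjoint A (A xα) + α • xα
            = ContinuousLinearMap.adjoint A yδ) :
    ‖xα - xdag‖ ≤ (1/2) * (δ / Real.sqrt α + Real.sqrt α * ρ) := by
  set e := xα - xdag with he
  have hδ : 0 ≤ δ := le_trans (norm_nonneg _) hnoise
  have hρ : 0 ≤ ρ := le_trans (norm_nonneg _) hz
  have h1 : ContinuousLinearMap.adjoint A (A e) + α • e
      = ContinuousLinearMap.adjoint A (yδ - A xdag) - α • xdag := by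
    simp only [he, map_sub, smul_sub]
    rw [← hxα]
    abel
  have key : ‖A e‖^2 + α * ‖e‖^2
      = inner ℝ (yδ - A xdag) (A e) - α * inner ℝ z (A e) := by
    have h2 := congrArg (fun w => (inner ℝ w e : ℝ)) h1
    simp only [inner_add_left, inner_sub_left, real_inner_smul_left,
      ContinuousLinearMap.adjoint_inner_left, real_inner_self_eq_norm_sq] at h2
    rw [hxdag] at h2 ⊢
    simp only [ContinuousLinearMap.adjoint_inner_left, inner_sub_left] at h2 ⊢
    linarith [h2]
  have cs1 : (inner ℝ (yδ - A xdag) (A e) : ℝ) ≤ δ * ‖A e‖ := by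
    calc (inner ℝ (yδ - A xdag) (A e) : ℝ) ≤ ‖yδ - A xdag‖ * ‖A e‖ := real_inner_le_norm _ _
    _ ≤ δ * ‖A e‖ := by gcongr
  have cs2 : -(inner ℝ z (A e) : ℝ) ≤ ρ * ‖A e‖ := by
    calc -(inner ℝ z (A e) : ℝ) = inner ℝ (-z) (A e) := by rw [inner_neg_left]
    _ ≤ ‖-z‖ * ‖A e‖ := real_inner_le_norm _ _
    _ ≤ ρ * ‖A e‖ := by rw [norm_neg]; gcongr
  have hb : α * ‖e‖^2 ≤ (δ + α * ρ)^2 / 4 := by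
    nlinarith [sq_nonneg (‖A e‖ - (δ + α * ρ)/2), key, cs1, cs2]
  set s := Real.sqrt α with hs
  have hs0 : 0 < s := Real.sqrt_pos.mpr hα
  have hs2 : s^2 = α := Real.sq_sqrt hα.le
  have hc0 : (0:ℝ) ≤ (δ + α * ρ)/2 := by positivity
  have ht2 : (s * ‖e‖)^2 = α * ‖e‖^2 := by rw [mul_pow, hs2]
  have hse : s * ‖e‖ ≤ (δ + α * ρ)/2 := by
    have h3 : (s * ‖e‖)^2 ≤ ((δ + α * ρ)/2)^2 := by rw [ht2]; nlinarith [hb]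
    exact (pow_le_pow_iff_left₀ (by positivity) hc0 two_ne_zero).mp h3
  have hrhs : (1:ℝ)/2 * (δ / s + s * ρ) = (δ + α * ρ)/(2*s) := by
    rw [← hs2]; field_simp
  rw [hrhs, le_div_iff₀ (by positivity)]
  nlinarith [hse]
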